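/- Let F be the free group on two generators a and b, and let M = ℚ⟦X⟧ as a ℚ-vector space, made into an F-representation by letting a act as multiplication by the power series exp(X) = Σ_{n≥0} Xⁿ/n! and b act as the identity. Then the group cohomology of F with coefficients in M satisfies: H⁰(F, M) = 0, and H¹(F, M) is isomorphic as a ℚ-vector space to ℚ × ℚ⟦X⟧. (This is the computation H⁰(U, Log_U) = 0 and H¹(U, Log_U) = ℚ(−1) ⊕ ∏_{k≥0} ℚ(k−1) underlying rigidity, expressed on underlying local systems via the fundamental group of ℙ¹(ℂ)∖{0,1,∞}, which is free on the loops α₀, α₁.) -/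

import Mathlib

open PowerSeries

/-- `exp X = ∑_{n ≥ 0} Xⁿ/n!` as a unit of `ℚ⟦X⟧`. -/
noncomputable def expUnit : (PowerSeries ℚ)ˣ :=
  (show IsUnit (PowerSeries.exp ℚ) from
    PowerSeries.isUnit_iff_constantCoeff.mpr
      (by rw [PowerSeries.constantCoeff_exp]; exact isUnit_one)).unit

/-- The homomorphism from the free group on two generators `a = of true`, `b = of false`
to units of `ℚ⟦X⟧`, sending `a` to `exp X` and `b` to `1`. -/
noncomputable def freeGroupToUnits : FreeGroup Bool →* (PowerSeries ℚ)ˣ :=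
  FreeGroup.lift (fun b => if b then expUnit else 1)

/-- The representation of the free group on two generators on `M = ℚ⟦X⟧`, where
`a = of true` acts as multiplication by `exp X` and `b = of false` acts as the identity. -/
noncomputable def logRep : Representation ℚ (FreeGroup Bool) (PowerSeries ℚ) :=
  ((Algebra.lmul ℚ (PowerSeries ℚ)).toRingHom.toMonoidHom.comp
    (Units.coeHom (PowerSeries ℚ))).comp freeGroupToUnits

lemma coe_expUnit : (expUnit : PowerSeries ℚ) = PowerSeries.exp ℚ := rfl

lemma freeGroupToUnits_true : freeGroupToUnits (FreeGroup.of true) = expUnit := by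
  simp [freeGroupToUnits]

lemma freeGroupToUnits_false : freeGroupToUnits (FreeGroup.of false) = 1 := by
  simp [freeGroupToUnits]

lemma logRep_apply (g : FreeGroup Bool) (m : PowerSeries ℚ) :
    logRep g m = (freeGroupToUnits g : PowerSeries ℚ) * m := rfl

lemma logRep_true (m : PowerSeries ℚ) :
    logRep (FreeGroup.of true) m = PowerSeries.exp ℚ * m := by
  rw [logRep_apply, freeGroupToUnits_true, coe_expUnit]

lemma logRep_false (m : PowerSeries ℚ) : logRep (FreeGroup.of false) m = m := by
  rw [logRep_apply, freeGroupToUnits_false, Units.val_one, one_mul]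

lemma logRep_injective (g : FreeGroup Bool) : Function.Injective (logRep g) := by
  intro x y h
  have h2 := congrArg (logRep g⁻¹) h
  have h3 : ∀ z, logRep g⁻¹ (logRep g z) = z := by
    intro z
    rw [← Module.End.mul_apply, ← map_mul, inv_mul_cancel, map_one, Module.End.one_apply]
  rwa [h3, h3] at h2

/-- The action of units of `ℚ⟦X⟧` on `Multiplicative ℚ⟦X⟧` by multiplication. -/
noncomputable def unitsAut : (PowerSeries ℚ)ˣ →* MulAut (Multiplicative (PowerSeries ℚ)) where
  toFun u :=
    { toFun := fun m => Multiplicative.ofAdd ((u : PowerSeries ℚ) * m.toAdd)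
      invFun := fun m => Multiplicative.ofAdd (((u⁻¹ : (PowerSeries ℚ)ˣ) : PowerSeries ℚ) * m.toAdd)
      left_inv := fun m => by simp [← mul_assoc]
      right_inv := fun m => by simp [← mul_assoc]
      map_mul' := fun x y => by
        show Multiplicative.ofAdd ((u : PowerSeries ℚ) * Multiplicative.toAdd (x * y)) = _
        rw [toAdd_mul, mul_add, ofAdd_add] }
  map_one' := by ext m; simp
  map_mul' u v := by ext m; simp [mul_assoc]

/-- The action of the free group on `Multiplicative ℚ⟦X⟧` coming from `logRep`. -/
noncomputable def φaut : FreeGroup Bool →* MulAut (Multiplicative (PowerSeries ℚ)) :=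
  unitsAut.comp freeGroupToUnits

/-- The homomorphism to the semidirect product sending `of b` to `(p or q, of b)`. -/
noncomputable def sdHom (p q : PowerSeries ℚ) :
    FreeGroup Bool →* (Multiplicative (PowerSeries ℚ) ⋊[φaut] FreeGroup Bool) :=
  FreeGroup.lift (fun b => ⟨Multiplicative.ofAdd (if b then p else q), FreeGroup.of b⟩)

lemma sdHom_right (p q : PowerSeries ℚ) (g : FreeGroup Bool) : (sdHom p q g).right = g := by
  have : SemidirectProduct.rightHom.comp (sdHom p q) = MonoidHom.id (FreeGroup Bool) := by
    apply FreeGroup.ext_hom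
    intro a
    simp [sdHom, SemidirectProduct.rightHom]
  exact DFunLike.congr_fun this g

/-- The 1-cocycle taking values `p` and `q` on the two generators. -/
noncomputable def cocycleFun (p q : PowerSeries ℚ) : FreeGroup Bool → PowerSeries ℚ :=
  fun g => (sdHom p q g).left.toAdd

lemma cocycleFun_of (p q : PowerSeries ℚ) (b : Bool) :
    cocycleFun p q (FreeGroup.of b) = if b then p else q := by
  simp [cocycleFun, sdHom]

lemma cocycleFun_mem (p q : PowerSeries ℚ) :
    cocycleFun p q ∈ groupCohomology.cocycles₁ (Rep.of logRep) := by
  rw [groupCohomology.mem_cocycles₁_iff]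
  intro g h
  show ((sdHom p q (g * h)).left).toAdd = _
  rw [map_mul, SemidirectProduct.mul_left, sdHom_right]
  show (sdHom p q g).left.toAdd + (φaut g (sdHom p q h).left).toAdd = _
  have : (φaut g (sdHom p q h).left).toAdd
      = logRep g ((sdHom p q h).left.toAdd) := rfl
  rw [this, add_comm]
  rfl

lemma cocycle_eq_of_eq_on_gens (f g : groupCohomology.cocycles₁ (Rep.of logRep))
    (h1 : f (FreeGroup.of true) = g (FreeGroup.of true))
    (h2 : f (FreeGroup.of false) = g (FreeGroup.of false)) : f = g := by
  ext x : 1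
  induction x using FreeGroup.induction_on with
  | C1 => rw [groupCohomology.cocycles₁_map_one, groupCohomology.cocycles₁_map_one]
  | of b => cases b <;> assumption
  | inv_of b hb =>
      apply logRep_injective (FreeGroup.of b)
      have hf : logRep (FreeGroup.of b) (f (FreeGroup.of b)⁻¹) = -f (FreeGroup.of b) :=
        groupCohomology.cocycles₁_map_inv f (FreeGroup.of b)
      have hg : logRep (FreeGroup.of b) (g (FreeGroup.of b)⁻¹) = -g (FreeGroup.of b) :=
        groupCohomology.cocycles₁_map_inv g (FreeGroup.of b)
      show logRep (FreeGroup.of b) (f (FreeGroup.of b)⁻¹)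
        = logRep (FreeGroup.of b) (g (FreeGroup.of b)⁻¹)
      rw [hf, hg]
      cases b
      · rw [h2]
      · rw [h1]
  | mul x y hx hy =>
      rw [(groupCohomology.mem_cocycles₁_iff (f : FreeGroup Bool → PowerSeries ℚ)).1 f.2 x y,
        (groupCohomology.mem_cocycles₁_iff (g : FreeGroup Bool → PowerSeries ℚ)).1 g.2 x y,
        hx, hy]

/-- Evaluation of 1-cocycles: constant coefficient at `a` and full value at `b`. -/
noncomputable def Ψ : groupCohomology.cocycles₁ (Rep.of logRep) →ₗ[ℚ] ℚ × PowerSeries ℚ where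
  toFun f := (PowerSeries.constantCoeff (f (FreeGroup.of true)), f (FreeGroup.of false))
  map_add' f g := by
    show (PowerSeries.constantCoeff ((f : FreeGroup Bool → PowerSeries ℚ) (FreeGroup.of true)
      + (g : FreeGroup Bool → PowerSeries ℚ) (FreeGroup.of true)), _) = _
    simp [Prod.ext_iff]
    rfl
  map_smul' c f := by
    show (PowerSeries.constantCoeff
      (c • (f : FreeGroup Bool → PowerSeries ℚ) (FreeGroup.of true)), _) = _
    simp [Prod.ext_iff, PowerSeries.constantCoeff_smul]
    rfl

lemma Ψ_surjective : Function.Surjective Ψ := by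
  rintro ⟨c, t⟩
  refine ⟨⟨cocycleFun (PowerSeries.C c) t, cocycleFun_mem _ _⟩, ?_⟩
  show (PowerSeries.constantCoeff (cocycleFun (PowerSeries.C c) t (FreeGroup.of true)),
    cocycleFun (PowerSeries.C c) t (FreeGroup.of false)) = (c, t)
  rw [cocycleFun_of, cocycleFun_of]
  simp

lemma exp_sub_one_factor :
    ∃ x : PowerSeries ℚ, ∀ y : PowerSeries ℚ, PowerSeries.constantCoeff y = 0 →
      ∃ z, (PowerSeries.exp ℚ - 1) * z = y := by
  obtain ⟨u, hu⟩ : (PowerSeries.X : PowerSeries ℚ) ∣ (PowerSeries.exp ℚ - 1) :=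
    PowerSeries.X_dvd_iff.mpr (by simp)
  have hu1 : PowerSeries.constantCoeff u = 1 := by
    have := congrArg (PowerSeries.coeff 1) hu
    rw [PowerSeries.coeff_succ_X_mul] at this
    simp only [map_sub, PowerSeries.coeff_exp, PowerSeries.coeff_one] at this
    simpa using this.symm
  have hU : IsUnit u := PowerSeries.isUnit_iff_constantCoeff.mpr (by rw [hu1]; exact isUnit_one)
  obtain ⟨U, hUe⟩ := hU
  refine ⟨0, fun y hy => ?_⟩
  obtain ⟨w, hw⟩ : (PowerSeries.X : PowerSeries ℚ) ∣ y := PowerSeries.X_dvd_iff.mpr hy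
  refine ⟨(U⁻¹ : (PowerSeries ℚ)ˣ) * w, ?_⟩
  rw [hu, hw, ← hUe]
  rw [mul_assoc, ← mul_assoc (U : PowerSeries ℚ), Units.mul_inv, one_mul]

lemma Ψ_dZero (x : PowerSeries ℚ) :
    Ψ ((groupCohomology.shortComplexH1 (Rep.of logRep)).moduleCatToCycles x) = 0 := by
  show (PowerSeries.constantCoeff (logRep (FreeGroup.of true) x - x),
    logRep (FreeGroup.of false) x - x) = 0
  rw [logRep_true, logRep_false, sub_self]
  have hc : PowerSeries.constantCoeff (PowerSeries.exp ℚ * x - x) = 0 := by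
    rw [map_sub, map_mul, PowerSeries.constantCoeff_exp, one_mul, sub_self]
  rw [hc]
  rfl

lemma ker_Ψ : LinearMap.ker Ψ =
    LinearMap.range (groupCohomology.shortComplexH1 (Rep.of logRep)).moduleCatToCycles := by
  apply le_antisymm
  · intro f hf
    rw [LinearMap.mem_ker] at hf
    have hfa : PowerSeries.constantCoeff (f (FreeGroup.of true)) = 0 :=
      congrArg Prod.fst hf
    have hfb : f (FreeGroup.of false) = 0 := congrArg Prod.snd hf
    obtain ⟨_, hfac⟩ := exp_sub_one_factor
    obtain ⟨x, hx⟩ := hfac _ hfa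
    refine ⟨x, ?_⟩
    apply cocycle_eq_of_eq_on_gens
    · show (groupCohomology.d₀₁ (Rep.of logRep)).hom x (FreeGroup.of true) = _
      rw [groupCohomology.d₀₁_hom_apply]
      show logRep (FreeGroup.of true) x - x = _
      rw [logRep_true, ← hx, sub_mul, one_mul]
    · show (groupCohomology.d₀₁ (Rep.of logRep)).hom x (FreeGroup.of false) = _
      rw [groupCohomology.d₀₁_hom_apply]
      show logRep (FreeGroup.of false) x - x = _
      rw [logRep_false, sub_self, hfb]
  · intro f hf
    obtain ⟨x, hx⟩ := hf
    rw [LinearMap.mem_ker, ← hx]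
    exact Ψ_dZero x

lemma exp_ne_one : PowerSeries.exp ℚ ≠ 1 := by
  intro h
  have := congrArg (PowerSeries.coeff 1) h
  rw [PowerSeries.coeff_exp, PowerSeries.coeff_one] at this
  simp at this

lemma invariant_eq_zero (m : PowerSeries ℚ) (hm : logRep (FreeGroup.of true) m = m) :
    m = 0 := by
  have ha : PowerSeries.exp ℚ * m = m := by rw [← logRep_true]; exact hm
  have hz : (PowerSeries.exp ℚ - 1) * m = 0 := by rw [sub_mul, one_mul, ha, sub_self]
  rcases mul_eq_zero.1 hz with h | h
  · exact absurd (sub_eq_zero.1 h) exp_ne_one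
  · exact h


/-- For the free group `F` on two generators acting on `M = ℚ⟦X⟧` with `a` acting as
multiplication by `exp X` and `b` acting as the identity, the group cohomology satisfies
`H⁰(F, M) = 0` and `H¹(F, M) ≅ ℚ × ℚ⟦X⟧` as `ℚ`-vector spaces. -/
theorem h0_eq_bot_and_h1_iso :
    (Rep.of logRep).ρ.invariants = ⊥ ∧
    Nonempty (groupCohomology.H1 (Rep.of logRep) ≃ₗ[ℚ] ℚ × PowerSeries ℚ) := by
  constructor
  · rw [eq_bot_iff]
    intro m hm
    rw [Submodule.mem_bot]
    exact invariant_eq_zero m (hm (FreeGroup.of true))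
  · let Ψ' : LinearMap.ker (groupCohomology.shortComplexH1 (Rep.of logRep)).g.hom →ₗ[ℚ]
        ℚ × PowerSeries ℚ := Ψ
    exact ⟨(groupCohomology.H1Iso (Rep.of logRep)).toLinearEquiv.trans
      ((Submodule.quotEquivOfEq _ (LinearMap.ker Ψ') (by exact ker_Ψ.symm)).trans
      (Ψ'.quotKerEquivOfSurjective Ψ_surjective))⟩
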